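/- Let s, t ∈ S be distinct binary sequences and let m be the least index with s_m ≠ t_m. Then the local intersection multiplicity at the origin of the formal curves C_s = {φ_s = 0} and C_t = {φ_t = 0}, namely dim_ℂ ℂ⟦X,Y⟧/(φ_s, φ_t), equals (4^{m+1} + 2)/3. -/

import Mathlib

noncomputable section

/-- The space of binary sequences `{0,1}^ℕ`. -/
abbrev BinSeq := ℕ → Fin 2

/-- The left-shift map `σ`. -/
def shift (s : BinSeq) : BinSeq := fun n => s (n + 1)

/-- `a : S → ℕ → ℂ` satisfies the recursion defining the coefficients `aₙˢ`:
`a₀ˢ = (−1)^{s₀}` and `a_{n+1}ˢ = −(1/(2a₀ˢ)) Σ_{i+j=n+1, i,j≥1} aᵢˢ aⱼˢ` if `4 ∤ n`,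
with the extra term `−a_{n/4}^{σ(s)}/(2a₀ˢ)` if `4 ∣ n`. -/
def IsCoeffFamily (a : BinSeq → ℕ → ℂ) : Prop :=
  (∀ s : BinSeq, a s 0 = (-1 : ℂ) ^ (s 0 : ℕ)) ∧
  (∀ (s : BinSeq) (n : ℕ), a s (n + 1) =
    if 4 ∣ n then
      -(a (shift s) (n / 4)) / (2 * a s 0)
        - (∑ i ∈ Finset.Ico 1 (n + 1), a s i * a s (n + 1 - i)) / (2 * a s 0)
    else
      -(∑ i ∈ Finset.Ico 1 (n + 1), a s i * a s (n + 1 - i)) / (2 * a s 0))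

/-- The series `Σ_{n≥0} aₙˢ Y^(2+4n)` viewed inside `ℂ⟦X,Y⟧`
(variable `0` is `X`, variable `1` is `Y`). -/
def tailSer (a : BinSeq → ℕ → ℂ) (s : BinSeq) : MvPowerSeries (Fin 2) ℂ :=
  fun d => if d 0 = 0 ∧ d 1 % 4 = 2 then a s ((d 1 - 2) / 4) else 0

/-- The two-variable series `φ_s = X + Σ_{n≥0} aₙˢ Y^(2+4n) ∈ ℂ⟦X,Y⟧`. -/
def phi (a : BinSeq → ℕ → ℂ) (s : BinSeq) : MvPowerSeries (Fin 2) ℂ :=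
  MvPowerSeries.X 0 + tailSer a s

open MvPowerSeries

abbrev A2 := MvPowerSeries (Fin 2) ℂ
abbrev P2 := MvPolynomial (Fin 2) ℂ

def NN : ℕ → ℕ
  | 0 => 0
  | m + 1 => 4 * NN m + 1

lemma NN_eq (m : ℕ) : 3 * NN m + 1 = 4 ^ m := by
  induction m with
  | zero => simp [NN]
  | succ m ih => rw [NN]; rw [pow_succ]; omega

lemma a_zero_ne (a : BinSeq → ℕ → ℂ) (ha : IsCoeffFamily a) (s : BinSeq) : a s 0 ≠ 0 := by
  rw [ha.1]; exact pow_ne_zero _ (by norm_num)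

lemma agree (a : BinSeq → ℕ → ℂ) (ha : IsCoeffFamily a) :
    ∀ m (s t : BinSeq), (∀ k < m, s k = t k) → ∀ n, n < NN m → a s n = a t n := by
  intro m
  induction m with
  | zero => intro s t _ n hn; simp [NN] at hn
  | succ m ih =>
    intro s t hst n
    induction n using Nat.strong_induction_on with
    | _ n ihn =>
      intro hn
      match n with
      | 0 => rw [ha.1, ha.1, hst 0 (Nat.succ_pos m)]
      | Nat.succ n =>
        have h0 : a s 0 = a t 0 := by rw [ha.1, ha.1, hst 0 (Nat.succ_pos m)]
        have hsum : (∑ i ∈ Finset.Ico 1 (n + 1), a s i * a s (n + 1 - i)) =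
            ∑ i ∈ Finset.Ico 1 (n + 1), a t i * a t (n + 1 - i) := by
          apply Finset.sum_congr rfl
          intro i hi
          simp only [Finset.mem_Ico] at hi
          rw [ihn i (by omega) (by omega), ihn (n + 1 - i) (by omega) (by omega)]
        rw [ha.2, ha.2]
        by_cases h4 : 4 ∣ n
        · rw [if_pos h4, if_pos h4, hsum, h0]
          have : a (shift s) (n / 4) = a (shift t) (n / 4) := by
            apply ih (shift s) (shift t) (fun k hk => hst (k + 1) (by omega))
            have := hn
            rw [NN] at this
            omega
          rw [this]
        · rw [if_neg h4, if_neg h4, hsum, h0]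

lemma differ (a : BinSeq → ℕ → ℂ) (ha : IsCoeffFamily a) :
    ∀ m (s t : BinSeq), (∀ k < m, s k = t k) → s m ≠ t m →
      a s (NN m) ≠ a t (NN m) := by
  intro m
  induction m with
  | zero =>
    intro s t _ h
    rw [NN, ha.1, ha.1]
    have hs := (s 0).isLt
    have ht := (t 0).isLt
    have hne : (s 0 : ℕ) ≠ (t 0 : ℕ) := fun hc => h (Fin.ext hc)
    interval_cases hv : (s 0 : ℕ) <;> interval_cases hw : (t 0 : ℕ) <;> norm_num at *
  | succ m ih =>
    intro s t hst h
    have h0 : a s 0 = a t 0 := by rw [ha.1, ha.1, hst 0 (Nat.succ_pos m)]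
    have h0ne : a s 0 ≠ 0 := a_zero_ne a ha s
    have hNN : NN (m + 1) = 4 * NN m + 1 := rfl
    rw [hNN, ha.2, ha.2]
    have h4 : 4 ∣ 4 * NN m := ⟨NN m, rfl⟩
    rw [if_pos h4, if_pos h4]
    have hsum : (∑ i ∈ Finset.Ico 1 (4 * NN m + 1), a s i * a s (4 * NN m + 1 - i)) =
        ∑ i ∈ Finset.Ico 1 (4 * NN m + 1), a t i * a t (4 * NN m + 1 - i) := by
      apply Finset.sum_congr rfl
      intro i hi
      simp only [Finset.mem_Ico] at hi
      rw [agree a ha (m + 1) s t hst i (by rw [hNN]; omega),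
        agree a ha (m + 1) s t hst (4 * NN m + 1 - i) (by rw [hNN]; omega)]
    have hdiv : (4 * NN m) / 4 = NN m := by omega
    rw [hsum, h0, hdiv]
    have hshift : a (shift s) (NN m) ≠ a (shift t) (NN m) :=
      ih (shift s) (shift t) (fun k hk => hst (k + 1) (by omega)) h
    intro hc
    apply hshift
    have h2 : (2 : ℂ) * a t 0 ≠ 0 := by
      rw [← h0]; exact mul_ne_zero two_ne_zero h0ne
    field_simp at hc
    rw [div_left_inj' (h0 ▸ h0ne : a t 0 ≠ 0)] at hc; linear_combination -hc

lemma coeff_vanish_mul (w z : A2) (n : Fin 2 →₀ ℕ)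
    (h : ∀ m, m < n → MvPowerSeries.coeff m w = 0) :
    ∀ m, m < n → MvPowerSeries.coeff m (w * z) = 0 := by
  intro m hm
  rw [MvPowerSeries.coeff_mul]
  apply Finset.sum_eq_zero
  rintro ⟨i, j⟩ hij
  rw [Finset.HasAntidiagonal.mem_antidiagonal] at hij
  have : i ≤ m := hij ▸ le_add_right le_rfl
  rw [h i (lt_of_le_of_lt this hm), zero_mul]

lemma mem_of_low_vanish (I : Ideal A2) (d : ℕ)
    (hX : (MvPowerSeries.X 0 : A2) ^ d ∈ I) (hY : (MvPowerSeries.X 1 : A2) ^ d ∈ I)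
    (G : A2) (hG : ∀ e : Fin 2 →₀ ℕ, e 0 < d → e 1 < d → MvPowerSeries.coeff e G = 0) :
    G ∈ I := by
  set G1 : A2 := fun e => if d ≤ e 0 then G e else 0 with hG1
  have h1 : (MvPowerSeries.X 0 : A2) ^ d ∣ G1 := by
    rw [MvPowerSeries.X_pow_dvd_iff]
    intro e he
    show (if d ≤ e 0 then G e else 0) = 0
    simp only [if_neg (by omega : ¬ d ≤ e 0)]
  have h2 : (MvPowerSeries.X 1 : A2) ^ d ∣ (G - G1) := by
    rw [MvPowerSeries.X_pow_dvd_iff]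
    intro e he
    rw [map_sub]
    have hc1 : MvPowerSeries.coeff e G1 = if d ≤ e 0 then G e else 0 := rfl
    have hcG : MvPowerSeries.coeff e G = G e := rfl
    by_cases h : d ≤ e 0
    · rw [hc1, if_pos h, hcG]; ring
    · rw [hc1, if_neg h, hcG, ← hcG, hG e (by omega) he]; ring
  obtain ⟨q1, e1⟩ := h1
  obtain ⟨q2, e2⟩ := h2
  have : G = (MvPowerSeries.X 0 : A2) ^ d * q1 + (MvPowerSeries.X 1 : A2) ^ d * q2 := by
    rw [← e1, ← e2]; ring
  rw [this]
  exact add_mem (I.mul_mem_right _ hX) (I.mul_mem_right _ hY)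

lemma mono_mem (J : Ideal P2) (e : Fin 2 →₀ ℕ) (c : ℂ) (i : Fin 2) (k : ℕ)
    (hk : k ≤ e i) (hX : (MvPolynomial.X i : P2) ^ k ∈ J) :
    MvPolynomial.monomial e c ∈ J := by
  have heq : MvPolynomial.monomial e c =
      (MvPolynomial.X i : P2) ^ k * MvPolynomial.monomial (e - Finsupp.single i k) c := by
    rw [MvPolynomial.X_pow_eq_monomial, MvPolynomial.monomial_mul, one_mul]
    congr 1
    rw [add_tsub_cancel_of_le (Finsupp.single_le_iff.2 hk)]
  rw [heq]
  exact J.mul_mem_right _ hX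

lemma poly_mem (J : Ideal P2) (p : P2)
    (H : ∀ e ∈ p.support, MvPolynomial.monomial e (MvPolynomial.coeff e p) ∈ J) : p ∈ J := by
  rw [← MvPolynomial.support_sum_monomial_coeff p]
  exact Ideal.sum_mem J H

lemma coeff_single_X_pow_mul (i : Fin 2) (k : ℕ) (ψ : A2) :
    MvPowerSeries.coeff (Finsupp.single i k) ((MvPowerSeries.X i : A2) ^ k * ψ) =
      MvPowerSeries.constantCoeff ψ := by
  rw [MvPowerSeries.coeff_mul]
  rw [Finset.sum_eq_single (Finsupp.single i k, 0)]
  · rw [MvPowerSeries.coeff_X_pow, if_pos rfl, one_mul,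
      MvPowerSeries.coeff_zero_eq_constantCoeff_apply]
  · rintro ⟨p, q⟩ hpq hne
    rw [Finset.HasAntidiagonal.mem_antidiagonal] at hpq
    simp only at hpq hne ⊢
    rw [MvPowerSeries.coeff_X_pow]
    split_ifs with hp
    · exfalso
      apply hne
      have hq : q = 0 := by
        have h2 := hpq
        rw [← hp] at h2
        rwa [add_eq_left] at h2
      rw [Prod.ext_iff]
      exact ⟨hp, hq⟩
    · exact zero_mul _
  · intro h
    exact absurd (Finset.HasAntidiagonal.mem_antidiagonal.2 (add_zero _)) h

lemma aeval_eq_on_support {B : Type*} [CommRing B] [Algebra ℂ B] (p : P2)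
    (hp : ∀ e ∈ p.support, e 0 = 0) (v w : Fin 2 → B) (hvw : v 1 = w 1) :
    MvPolynomial.aeval v p = MvPolynomial.aeval w p := by
  rw [← MvPolynomial.support_sum_monomial_coeff p, map_sum, map_sum]
  apply Finset.sum_congr rfl
  intro e he
  rw [MvPolynomial.aeval_monomial, MvPolynomial.aeval_monomial]
  congr 1
  apply Finsupp.prod_congr
  intro i hi
  have hi0 : i ≠ 0 := by
    intro h
    subst h
    exact (Finsupp.mem_support_iff.1 hi) (hp e he)
  have h1 : i = 1 := by fin_omega
  subst h1
  rw [hvw]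

lemma coeff_tail (a : BinSeq → ℕ → ℂ) (s : BinSeq) (e : Fin 2 →₀ ℕ) :
    MvPowerSeries.coeff e (tailSer a s) =
      if e 0 = 0 ∧ e 1 % 4 = 2 then a s ((e 1 - 2) / 4) else 0 := rfl

lemma coe_sub' (p q : P2) : ((p - q : P2) : A2) = (p : A2) - (q : A2) := by
  rw [← MvPolynomial.coeToMvPowerSeries.ringHom_apply, map_sub,
    MvPolynomial.coeToMvPowerSeries.ringHom_apply, MvPolynomial.coeToMvPowerSeries.ringHom_apply]

lemma lt_n0 (D : ℕ) (e : Fin 2 →₀ ℕ) (h0 : e 0 < D) (h1 : e 1 < D) :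
    e < Finsupp.single (0 : Fin 2) D + Finsupp.single 1 D := by
  have hn0 : (Finsupp.single (0 : Fin 2) D + Finsupp.single 1 D : Fin 2 →₀ ℕ) 0 = D := by
    rw [Finsupp.add_apply, Finsupp.single_apply, Finsupp.single_apply]
    norm_num
  have hn1 : (Finsupp.single (0 : Fin 2) D + Finsupp.single 1 D : Fin 2 →₀ ℕ) 1 = D := by
    rw [Finsupp.add_apply, Finsupp.single_apply, Finsupp.single_apply]
    norm_num
  rw [lt_iff_le_and_ne]
  constructor
  · rw [Finsupp.le_def]
    intro i
    by_cases hi : i = 0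
    · subst hi; rw [hn0]; omega
    · have hi1 : i = 1 := by fin_omega
      subst hi1; rw [hn1]; omega
  · intro hc
    rw [hc] at h0
    omega

lemma not_lt_n0 (D : ℕ) (e : Fin 2 →₀ ℕ)
    (h : ¬ e < Finsupp.single (0 : Fin 2) D + Finsupp.single 1 D) : D ≤ e 0 ∨ D ≤ e 1 := by
  by_contra hc
  push_neg at hc
  exact h (lt_n0 D e hc.1 hc.2)

set_option maxHeartbeats 4000000 in
/-- If `s ≠ t` and `m` is the least index with `s m ≠ t m`, then the local intersection
multiplicity at the origin of the formal curves `C_s = {φ_s = 0}` and `C_t = {φ_t = 0}`,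
namely `dim_ℂ ℂ⟦X,Y⟧/(φ_s, φ_t)`, equals `(4^(m+1) + 2)/3`. -/
theorem stmt6 (a : BinSeq → ℕ → ℂ) (ha : IsCoeffFamily a) (s t : BinSeq) (hst : s ≠ t) :
    FiniteDimensional ℂ (MvPowerSeries (Fin 2) ℂ ⧸ Ideal.span {phi a s, phi a t}) ∧
    Module.finrank ℂ (MvPowerSeries (Fin 2) ℂ ⧸ Ideal.span {phi a s, phi a t}) =
      (4 ^ (sInf {m : ℕ | s m ≠ t m} + 1) + 2) / 3 := by
  classical
  set m : ℕ := sInf {m : ℕ | s m ≠ t m} with hm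
  have hne : {m : ℕ | s m ≠ t m}.Nonempty := by
    rw [Function.ne_iff] at hst
    exact hst
  have hmem : s m ≠ t m := Nat.sInf_mem hne
  have hmin : ∀ k < m, s k = t k := by
    intro k hk
    by_contra hc
    exact absurd (Nat.sInf_le hc) (Nat.not_le.2 hk)
  set N : ℕ := NN m with hN
  set d : ℕ := 4 * N + 2 with hd
  have hd2 : 2 ≤ d := by omega
  have hδ : a t N - a s N ≠ 0 :=
    sub_ne_zero.2 (Ne.symm (differ a ha m s t hmin hmem))
  have hagree : ∀ n < N, a s n = a t n := agree a ha m s t hmin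
  set n0 : Fin 2 →₀ ℕ := Finsupp.single (0 : Fin 2) d + Finsupp.single 1 d with hn0def
  -- (1) the difference of tails
  have hhdvd : (MvPowerSeries.X 1 : A2) ^ d ∣ (tailSer a t - tailSer a s) := by
    rw [MvPowerSeries.X_pow_dvd_iff]
    intro e he
    rw [map_sub, coeff_tail, coeff_tail]
    split_ifs with hcond
    · rw [hagree ((e 1 - 2) / 4) (by omega)]
      ring
    · ring
  obtain ⟨w, hw⟩ := hhdvd
  have hwc : MvPowerSeries.constantCoeff w = a t N - a s N := by
    have h1 : MvPowerSeries.coeff (Finsupp.single 1 d) (tailSer a t - tailSer a s)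
        = a t N - a s N := by
      rw [map_sub, coeff_tail, coeff_tail]
      have h0 : (Finsupp.single (1 : Fin 2) d) 0 = 0 := by simp [Finsupp.single_apply]
      have h1' : (Finsupp.single (1 : Fin 2) d) 1 = d := by simp
      rw [h0, h1']
      rw [if_pos ⟨rfl, by omega⟩]
      have hDN : (d - 2) / 4 = N := by omega
      rw [hDN]
      rw [if_pos (⟨rfl, by omega⟩ : (0 : ℕ) = 0 ∧ d % 4 = 2)]
    rw [hw, coeff_single_X_pow_mul] at h1
    exact h1
  set V : A2 := MvPowerSeries.invOfUnit w (Units.mk0 _ hδ) with hV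
  have hwV : w * V = 1 := MvPowerSeries.mul_invOfUnit w _ hwc
  -- (2) polynomial truncation of the tail
  set gp : P2 := MvPowerSeries.trunc ℂ n0 (tailSer a s) with hgp
  have hgp_coeff : ∀ e, MvPolynomial.coeff e gp =
      if e < n0 then MvPowerSeries.coeff e (tailSer a s) else 0 := by
    intro e; rw [hgp, MvPowerSeries.coeff_trunc]
  have hgp_supp0 : ∀ e ∈ gp.support, e 0 = 0 := by
    intro e he
    rw [MvPolynomial.mem_support_iff, hgp_coeff] at he
    by_contra hc
    apply he
    split_ifs with h
    · rw [coeff_tail, if_neg (by tauto)]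
    · rfl
  have hgp_supp1 : ∀ e ∈ gp.support, 1 ≤ e 1 := by
    intro e he
    rw [MvPolynomial.mem_support_iff, hgp_coeff] at he
    by_contra hc
    apply he
    split_ifs with h
    · rw [coeff_tail, if_neg (by omega)]
    · rfl
  have hcoe_gp : ∀ e, MvPowerSeries.coeff e (gp : A2) =
      if e < n0 then MvPowerSeries.coeff e (tailSer a s) else 0 := by
    intro e
    rw [MvPolynomial.coeff_coe, hgp_coeff]
  -- (3) tail s - gp divisible by Y^d
  have hgAdvd : (MvPowerSeries.X 1 : A2) ^ d ∣ (tailSer a s - (gp : A2)) := by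
    rw [MvPowerSeries.X_pow_dvd_iff]
    intro e he
    rw [map_sub, hcoe_gp]
    split_ifs with h
    · ring
    · have h0 : d ≤ e 0 ∨ d ≤ e 1 := not_lt_n0 d e h
      rw [coeff_tail, if_neg (by omega), sub_zero]
  obtain ⟨w0, hw0⟩ := hgAdvd
  -- (4) X1 divides gp (as power series)
  have hX1gA : (MvPowerSeries.X 1 : A2) ∣ (gp : A2) := by
    rw [MvPowerSeries.X_dvd_iff]
    intro e he
    rw [hcoe_gp]
    split_ifs with h
    · rw [coeff_tail, if_neg (by omega)]
    · rfl
  -- the target ideal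
  set I' : Ideal A2 := Ideal.span {MvPowerSeries.X 0 + (gp : A2), (MvPowerSeries.X 1 : A2) ^ d}
    with hI'
  have hX1d_mem : (MvPowerSeries.X 1 : A2) ^ d ∈ I' := by
    apply Ideal.subset_span; simp
  have hXgA_mem : MvPowerSeries.X 0 + (gp : A2) ∈ I' := by
    apply Ideal.subset_span; simp
  have hX0d_mem : (MvPowerSeries.X 0 : A2) ^ d ∈ I' := by
    obtain ⟨c, hc⟩ := sub_dvd_pow_sub_pow (MvPowerSeries.X 0 : A2) (-(gp : A2)) d
    rw [sub_neg_eq_add] at hc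
    have heven : (-(gp : A2)) ^ d = ((gp : A2)) ^ d :=
      Even.neg_pow (by exact ⟨2 * N + 1, by omega⟩) _
    rw [heven] at hc
    obtain ⟨r, hr⟩ := pow_dvd_pow_of_dvd hX1gA d
    rw [hI']
    rw [Ideal.mem_span_pair]
    exact ⟨c, r, by linear_combination -hc - hr⟩
  -- ideal equality
  have hYd_span : (MvPowerSeries.X 1 : A2) ^ d = (tailSer a t - tailSer a s) * V := by
    rw [hw]
    linear_combination (-((MvPowerSeries.X 1 : A2) ^ d)) * hwV
  have Ieq : Ideal.span {phi a s, phi a t} = I' := by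
    apply le_antisymm
    · rw [Ideal.span_le]
      rintro x hx
      simp only [Set.mem_insert_iff, Set.mem_singleton_iff] at hx
      rcases hx with rfl | rfl
      · rw [SetLike.mem_coe, hI', Ideal.mem_span_pair]
        refine ⟨1, w0, ?_⟩
        rw [phi]
        linear_combination -hw0
      · rw [SetLike.mem_coe, hI', Ideal.mem_span_pair]
        refine ⟨1, w0 + w, ?_⟩
        rw [phi]
        linear_combination -hw0 - hw
    · rw [hI', Ideal.span_le]
      rintro x hx
      simp only [Set.mem_insert_iff, Set.mem_singleton_iff] at hx
      rcases hx with rfl | rfl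
      · rw [SetLike.mem_coe, Ideal.mem_span_pair]
        refine ⟨1 + V * w0, -(V * w0), ?_⟩
        rw [phi, phi]
        linear_combination hw0 + w0 * hYd_span
      · rw [SetLike.mem_coe, Ideal.mem_span_pair]
        refine ⟨-V, V, ?_⟩
        rw [phi, phi]
        linear_combination -hYd_span
  rw [Ieq]
  -- the algebra hom from polynomials
  set Φ : P2 →ₐ[ℂ] A2 ⧸ I' :=
    (Ideal.Quotient.mkₐ ℂ I').comp (MvPolynomial.coeToMvPowerSeries.algHom ℂ) with hΦ
  have hΦ_apply : ∀ p : P2, Φ p = Ideal.Quotient.mk I' (p : A2) := by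
    intro p
    rw [hΦ]
    simp only [AlgHom.comp_apply, MvPolynomial.coeToMvPowerSeries.algHom_apply,
      Ideal.Quotient.mkₐ_eq_mk, Algebra.algebraMap_self, MvPowerSeries.map_id,
      RingHom.id_apply]
  have hsurj : Function.Surjective Φ := by
    intro qx
    obtain ⟨F, rfl⟩ := Ideal.Quotient.mk_surjective qx
    refine ⟨MvPowerSeries.trunc ℂ n0 F, ?_⟩
    rw [hΦ_apply, Ideal.Quotient.eq]
    apply mem_of_low_vanish I' d hX0d_mem hX1d_mem
    intro e h0 h1
    have hlt : e < n0 := lt_n0 d e h0 h1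
    rw [map_sub, MvPolynomial.coeff_coe, MvPowerSeries.coeff_trunc, if_pos hlt, sub_self]
  -- kernel computation
  set J : Ideal P2 := Ideal.span {MvPolynomial.X 0 + gp, (MvPolynomial.X 1 : P2) ^ d} with hJ
  have hJX1 : (MvPolynomial.X 1 : P2) ^ d ∈ J := Ideal.subset_span (by simp)
  have hJXg : MvPolynomial.X 0 + gp ∈ J := Ideal.subset_span (by simp)
  have hgp_span : gp ∈ Ideal.span {(MvPolynomial.X 1 : P2)} := by
    apply poly_mem
    intro e he
    exact mono_mem _ e _ 1 1 (hgp_supp1 e he) (by rw [pow_one]; exact Ideal.subset_span rfl)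
  have hJX0 : (MvPolynomial.X 0 : P2) ^ d ∈ J := by
    obtain ⟨c, hc⟩ := sub_dvd_pow_sub_pow (MvPolynomial.X 0 : P2) (-gp) d
    rw [sub_neg_eq_add] at hc
    have heven : (-gp) ^ d = gp ^ d := Even.neg_pow ⟨2 * N + 1, by omega⟩ _
    rw [heven] at hc
    have hgpd : gp ^ d ∈ Ideal.span {(MvPolynomial.X 1 : P2) ^ d} := by
      rw [← Ideal.span_singleton_pow]
      exact Ideal.pow_mem_pow hgp_span d
    rw [Ideal.mem_span_singleton] at hgpd
    obtain ⟨r, hr⟩ := hgpd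
    rw [hJ, Ideal.mem_span_pair]
    exact ⟨c, r, by linear_combination -hc - hr⟩
  have hker : RingHom.ker Φ = J := by
    apply le_antisymm
    · intro p hp
      rw [RingHom.mem_ker, hΦ_apply, Ideal.Quotient.eq_zero_iff_mem, hI',
        Ideal.mem_span_pair] at hp
      obtain ⟨u, v, huv⟩ := hp
      set Δ : P2 := p - (MvPowerSeries.trunc ℂ n0 u * (MvPolynomial.X 0 + gp) +
        MvPowerSeries.trunc ℂ n0 v * (MvPolynomial.X 1 : P2) ^ d) with hΔ
      have hΔcoe : (Δ : A2) = (u - ((MvPowerSeries.trunc ℂ n0 u : P2) : A2)) *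
            (MvPowerSeries.X 0 + (gp : A2)) +
          (v - ((MvPowerSeries.trunc ℂ n0 v : P2) : A2)) * (MvPowerSeries.X 1 : A2) ^ d := by
        rw [hΔ, coe_sub', MvPolynomial.coe_add, MvPolynomial.coe_mul, MvPolynomial.coe_mul,
          MvPolynomial.coe_add, MvPolynomial.coe_X, MvPolynomial.coe_pow, MvPolynomial.coe_X]
        linear_combination -huv
      have hvan : ∀ e : Fin 2 →₀ ℕ, e 0 < d → e 1 < d → MvPowerSeries.coeff e (Δ : A2) = 0 := by
        intro e h0 h1
        have hlt : e < n0 := lt_n0 d e h0 h1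
        rw [hΔcoe, map_add]
        have hvu : ∀ m, m < n0 →
            MvPowerSeries.coeff m (u - ((MvPowerSeries.trunc ℂ n0 u : P2) : A2)) = 0 := by
          intro mm hmm
          rw [map_sub, MvPolynomial.coeff_coe, MvPowerSeries.coeff_trunc, if_pos hmm, sub_self]
        have hvv : ∀ m, m < n0 →
            MvPowerSeries.coeff m (v - ((MvPowerSeries.trunc ℂ n0 v : P2) : A2)) = 0 := by
          intro mm hmm
          rw [map_sub, MvPolynomial.coeff_coe, MvPowerSeries.coeff_trunc, if_pos hmm, sub_self]
        rw [coeff_vanish_mul _ _ n0 hvu e hlt, coeff_vanish_mul _ _ n0 hvv e hlt, add_zero]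
      have hΔJ : Δ ∈ J := by
        apply poly_mem
        intro e he
        rw [MvPolynomial.mem_support_iff] at he
        have hec : ¬ (e 0 < d ∧ e 1 < d) := by
          intro hc
          apply he
          rw [← MvPolynomial.coeff_coe]
          exact hvan e hc.1 hc.2
        rcases (by omega : d ≤ e 0 ∨ d ≤ e 1) with h | h
        · exact mono_mem _ e _ 0 d h hJX0
        · exact mono_mem _ e _ 1 d h hJX1
      have hpe : p = Δ + (MvPowerSeries.trunc ℂ n0 u * (MvPolynomial.X 0 + gp) +
          MvPowerSeries.trunc ℂ n0 v * (MvPolynomial.X 1 : P2) ^ d) := by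
        rw [hΔ]; ring
      rw [hpe]
      exact add_mem hΔJ (add_mem (J.mul_mem_left _ hJXg) (J.mul_mem_left _ hJX1))
    · rw [hJ, Ideal.span_le]
      rintro x hx
      simp only [Set.mem_insert_iff, Set.mem_singleton_iff] at hx
      rcases hx with rfl | rfl
      · rw [SetLike.mem_coe, RingHom.mem_ker, hΦ_apply, MvPolynomial.coe_add,
          MvPolynomial.coe_X, Ideal.Quotient.eq_zero_iff_mem]
        exact hXgA_mem
      · rw [SetLike.mem_coe, RingHom.mem_ker, hΦ_apply, MvPolynomial.coe_pow,
          MvPolynomial.coe_X, Ideal.Quotient.eq_zero_iff_mem]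
        exact hX1d_mem
  -- the equivalence with the polynomial quotient
  have equivA : (P2 ⧸ J) ≃ₐ[ℂ] (A2 ⧸ I') :=
    (Ideal.quotientEquivAlgOfEq ℂ hker.symm).trans
      (Ideal.quotientKerAlgEquivOfSurjective hsurj)
  -- now the one-variable side
  set g1 : Polynomial ℂ := MvPolynomial.aeval ![0, Polynomial.X] gp with hg1
  set ψ : P2 →ₐ[ℂ] Polynomial ℂ := MvPolynomial.aeval ![-g1, Polynomial.X] with hψ
  have hψgp : ψ gp = g1 := by
    rw [hψ, hg1]
    exact aeval_eq_on_support gp hgp_supp0 _ _ (by simp)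
  have hψX0 : ψ (MvPolynomial.X 0) = -g1 := by
    rw [hψ, MvPolynomial.aeval_X]
    simp
  have hψX1 : ψ (MvPolynomial.X 1) = Polynomial.X := by
    rw [hψ, MvPolynomial.aeval_X]
    simp
  have hfwd0 : ∀ x ∈ J, ((Ideal.Quotient.mkₐ ℂ (Ideal.span {(Polynomial.X : Polynomial ℂ) ^ d})).comp ψ) x = 0 := by
    intro x hx
    rw [hJ, Ideal.mem_span_pair] at hx
    obtain ⟨u, v, huv⟩ := hx
    rw [← huv, map_add, map_mul, map_mul]
    have h1 : ((Ideal.Quotient.mkₐ ℂ (Ideal.span {(Polynomial.X : Polynomial ℂ) ^ d})).comp ψ) (MvPolynomial.X 0 + gp) = 0 := by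
      rw [AlgHom.comp_apply, map_add, hψgp, hψX0, neg_add_cancel, map_zero]
    have h2 : ((Ideal.Quotient.mkₐ ℂ (Ideal.span {(Polynomial.X : Polynomial ℂ) ^ d})).comp ψ) ((MvPolynomial.X 1 : P2) ^ d) = 0 := by
      rw [AlgHom.comp_apply, map_pow, hψX1, Ideal.Quotient.mkₐ_eq_mk,
        Ideal.Quotient.eq_zero_iff_mem]
      exact Ideal.subset_span rfl
    rw [h1, h2, mul_zero, mul_zero, add_zero]
  set fwd : (P2 ⧸ J) →ₐ[ℂ] (Polynomial ℂ ⧸ (Ideal.span {(Polynomial.X : Polynomial ℂ) ^ d})) :=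
    Ideal.Quotient.liftₐ J ((Ideal.Quotient.mkₐ ℂ (Ideal.span {(Polynomial.X : Polynomial ℂ) ^ d})).comp ψ) hfwd0 with hfwd
  have hbwd0 : ∀ x ∈ (Ideal.span {(Polynomial.X : Polynomial ℂ) ^ d}), ((Ideal.Quotient.mkₐ ℂ J).comp
      (Polynomial.aeval (MvPolynomial.X 1 : P2))) x = 0 := by
    intro x hx
    rw [Ideal.mem_span_singleton] at hx
    obtain ⟨c, rfl⟩ := hx
    rw [map_mul]
    have h2 : ((Ideal.Quotient.mkₐ ℂ J).comp (Polynomial.aeval (MvPolynomial.X 1 : P2)))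
        ((Polynomial.X : Polynomial ℂ) ^ d) = 0 := by
      rw [AlgHom.comp_apply, map_pow, Polynomial.aeval_X, Ideal.Quotient.mkₐ_eq_mk,
        Ideal.Quotient.eq_zero_iff_mem]
      exact hJX1
    rw [h2, zero_mul]
  set bwd : (Polynomial ℂ ⧸ (Ideal.span {(Polynomial.X : Polynomial ℂ) ^ d})) →ₐ[ℂ] (P2 ⧸ J) :=
    Ideal.Quotient.liftₐ (Ideal.span {(Polynomial.X : Polynomial ℂ) ^ d}) ((Ideal.Quotient.mkₐ ℂ J).comp
      (Polynomial.aeval (MvPolynomial.X 1 : P2))) hbwd0 with hbwd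
  have hfwd_mk : ∀ p : P2, fwd (Ideal.Quotient.mk J p) = Ideal.Quotient.mk (Ideal.span {(Polynomial.X : Polynomial ℂ) ^ d}) (ψ p) := by
    intro p
    rw [hfwd, Ideal.Quotient.liftₐ_apply]
    rfl
  have hbwd_mk : ∀ q : Polynomial ℂ, bwd (Ideal.Quotient.mk (Ideal.span {(Polynomial.X : Polynomial ℂ) ^ d}) q) =
      Ideal.Quotient.mk J (Polynomial.aeval (MvPolynomial.X 1 : P2) q) := by
    intro q
    rw [hbwd, Ideal.Quotient.liftₐ_apply]
    rfl
  have haeval_g1 : Polynomial.aeval (MvPolynomial.X 1 : P2) g1 = gp := by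
    rw [hg1, MvPolynomial.comp_aeval_apply (R := ℂ) (S₁ := Polynomial ℂ)
      (f := ![0, Polynomial.X]) (Polynomial.aeval (MvPolynomial.X 1 : P2)) gp]
    have hfun : (fun i => Polynomial.aeval (MvPolynomial.X 1 : P2)
          ((![0, Polynomial.X] : Fin 2 → Polynomial ℂ) i)) =
        (![0, MvPolynomial.X 1] : Fin 2 → P2) := by
      funext i
      fin_cases i <;> simp
    rw [hfun]
    rw [aeval_eq_on_support gp hgp_supp0 ![0, MvPolynomial.X 1] MvPolynomial.X (by simp)]
    rw [MvPolynomial.aeval_X_left_apply]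
  have equivB : (P2 ⧸ J) ≃ₐ[ℂ] (Polynomial ℂ ⧸ (Ideal.span {(Polynomial.X : Polynomial ℂ) ^ d})) := by
    refine AlgEquiv.ofAlgHom fwd bwd ?_ ?_
    · apply Ideal.Quotient.algHom_ext
      apply Polynomial.algHom_ext
      simp only [AlgHom.comp_apply, AlgHom.id_apply, Ideal.Quotient.mkₐ_eq_mk]
      rw [hbwd_mk, Polynomial.aeval_X, hfwd_mk, hψX1]
    · apply Ideal.Quotient.algHom_ext
      apply MvPolynomial.algHom_ext
      intro i
      simp only [AlgHom.comp_apply, AlgHom.id_apply, Ideal.Quotient.mkₐ_eq_mk]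
      by_cases hi : i = 0
      · subst hi
        rw [hfwd_mk, hψX0, hbwd_mk, map_neg, haeval_g1, Ideal.Quotient.eq]
        have heq : -gp - MvPolynomial.X 0 = -(MvPolynomial.X 0 + gp) := by ring
        rw [heq]
        exact neg_mem hJXg
      · have hi1 : i = 1 := by fin_omega
        subst hi1
        rw [hfwd_mk, hψX1, hbwd_mk, Polynomial.aeval_X]
  -- finrank of the polynomial quotient
  have hmonic : ((Polynomial.X : Polynomial ℂ) ^ d).Monic := Polynomial.monic_X_pow d
  have hfinK : FiniteDimensional ℂ (Polynomial ℂ ⧸ (Ideal.span {(Polynomial.X : Polynomial ℂ) ^ d})) := by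
    have pb := AdjoinRoot.powerBasis' (Polynomial.monic_X_pow (R := ℂ) d)
    exact Module.Finite.of_basis pb.basis
  have hrankK : Module.finrank ℂ (Polynomial ℂ ⧸ (Ideal.span {(Polynomial.X : Polynomial ℂ) ^ d})) = d := by
    have h := (AdjoinRoot.powerBasis' (Polynomial.monic_X_pow (R := ℂ) d)).finrank
    rw [AdjoinRoot.powerBasis'_dim, Polynomial.natDegree_X_pow] at h
    exact h
  -- combine
  have E : (A2 ⧸ I') ≃ₐ[ℂ] (Polynomial ℂ ⧸ (Ideal.span {(Polynomial.X : Polynomial ℂ) ^ d})) := (equivA.symm).trans equivB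
  constructor
  · exact Module.Finite.equiv E.symm.toLinearEquiv
  · rw [E.toLinearEquiv.finrank_eq, hrankK]
    have h3 := NN_eq m
    have h4 : (4 : ℕ) ^ (m + 1) = 4 * 4 ^ m := by rw [pow_succ]; ring
    omega
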